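/- Let X be a Fréchet space with increasing seminorms (p_n), each of whose kernels has finite codimension in X, Y a separable topological vector space with seminorms (q_j), and (T_n) continuous linear operators from X to Y. If there exist an increasing sequence (n_k) and X_0 ⊂ X such that (1) for every j and every x ∈ X_0, (q_j(T_{n_k} x))_k is ultimately zero, and (2) for every K ≥ 1, ⋃_{k≥K} T_{n_k}(X_0) is dense in Y, then (T_n) possesses a hypercyclic subspace. -/

import Mathlib

open Filter Topology

/-- The kernel of a seminorm, as a submodule. -/
def Seminorm.kerSubmodule {𝕜 X : Type*} [NormedField 𝕜] [AddCommGroup X] [Module 𝕜 X]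
    (p : Seminorm 𝕜 X) : Submodule 𝕜 X where
  carrier := {x | p x = 0}
  zero_mem' := map_zero p
  add_mem' := by
    intro a b ha hb
    simp only [Set.mem_setOf_eq] at *
    exact le_antisymm (by simpa [ha, hb] using map_add_le_add p a b) (apply_nonneg p _)
  smul_mem' := by
    intro c x hx
    simp only [Set.mem_setOf_eq] at *
    simp [map_smul_eq_mul, hx]

/-- Recursion along `ℕ` with full history. -/
def hcBuildSeq {D : Type*} (F : ∀ s : ℕ, (∀ t, t < s → D) → D) : ℕ → D
  | s => F s (fun t _ => hcBuildSeq F t)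
  termination_by s => s
  decreasing_by assumption

theorem hcBuildSeq_eq {D : Type*} (F : ∀ s : ℕ, (∀ t, t < s → D) → D) (s : ℕ) :
    hcBuildSeq F s = F s (fun t _ => hcBuildSeq F t) := by
  rw [hcBuildSeq]

/-- The invariant for one step of the construction.  The data
`d = (k, ρ, r, R, v)` records the chosen time `k`, a continuity index `ρ`,
a separation index `r`, a kernel index `R` and the vector `v`. -/
def HCStep {𝕜 X Y : Type*} [NormedField 𝕜] [AddCommGroup X] [Module 𝕜 X]
    [AddCommGroup Y] [Module 𝕜 Y]
    (p : ℕ → Seminorm 𝕜 X) (q : ℕ → Seminorm 𝕜 Y) (TT : ℕ → X → Y)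
    (Z : X → Prop) (tgt : ℕ → Y) (η : ℕ → ℝ) (istar : ℕ)
    (s : ℕ) (h : ℕ → ℕ × ℕ × ℕ × ℕ × X) (d : ℕ × ℕ × ℕ × ℕ × X) : Prop :=
  Z d.2.2.2.2 ∧
  p d.2.2.2.1 d.2.2.2.2 = 0 ∧
  s ≤ d.2.2.2.1 ∧
  (∀ t, t < s → max (h t).2.1 (max (h t).2.2.1 (h t).2.2.2.1) ≤ d.2.2.2.1) ∧
  q (s + istar) (TT d.1 d.2.2.2.2 - tgt s) < η s ∧
  (∃ C : ℝ, 0 ≤ C ∧ ∀ x, q (s + istar) (TT d.1 x) ≤ C * p d.2.1 x) ∧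
  (∀ t, t < s → ∀ i, i ≤ s + istar → q i (TT d.1 (h t).2.2.2.2) = 0) ∧
  ((Nat.unpair s).2 = 0 → p d.2.2.1 d.2.2.2.2 ≠ 0)

theorem HCStep_congr {𝕜 X Y : Type*} [NormedField 𝕜] [AddCommGroup X] [Module 𝕜 X]
    [AddCommGroup Y] [Module 𝕜 Y]
    (p : ℕ → Seminorm 𝕜 X) (q : ℕ → Seminorm 𝕜 Y) (TT : ℕ → X → Y)
    (Z : X → Prop) (tgt : ℕ → Y) (η : ℕ → ℝ) (istar : ℕ)
    (s : ℕ) {h₁ h₂ : ℕ → ℕ × ℕ × ℕ × ℕ × X} (d : ℕ × ℕ × ℕ × ℕ × X)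
    (hagree : ∀ t, t < s → h₁ t = h₂ t) :
    HCStep p q TT Z tgt η istar s h₁ d → HCStep p q TT Z tgt η istar s h₂ d := by
  intro hs
  obtain ⟨a1, a2, a3, a4, a5, a6, a7, a8⟩ := hs
  exact ⟨a1, a2, a3, fun t ht => hagree t ht ▸ a4 t ht, a5, a6,
    fun t ht i hi => hagree t ht ▸ a7 t ht i hi, a8⟩

/-- A seminorm of a finite sum of elements where it vanishes is zero. -/
theorem seminorm_sum_zero {𝕜 E : Type*} [NormedField 𝕜] [AddCommGroup E] [Module 𝕜 E]
    (g : Seminorm 𝕜 E) {α : Type*} (F : Finset α) (w : α → E)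
    (h : ∀ t ∈ F, g (w t) = 0) : g (∑ t ∈ F, w t) = 0 := by
  classical
  induction F using Finset.cons_induction with
  | empty => simp
  | cons a F ha ih =>
    rw [Finset.sum_cons]
    refine le_antisymm ?_ (apply_nonneg _ _)
    calc g (w a + ∑ t ∈ F, w t) ≤ g (w a) + g (∑ t ∈ F, w t) := map_add_le_add _ _ _
    _ ≤ 0 := by
        rw [h a (Finset.mem_cons_self _ _), ih (fun t ht => h t (Finset.mem_cons_of_mem ht))]
        simp

/-- Convergence of series whose `s`-th term is killed by the `s`-th seminorm. -/
theorem hc_sum_converges {𝕜 X : Type*} [NontriviallyNormedField 𝕜] [AddCommGroup X] [Module 𝕜 X]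
    [UniformSpace X] [IsUniformAddGroup X] [ContinuousSMul 𝕜 X] [CompleteSpace X]
    (p : ℕ → Seminorm 𝕜 X) (hp : WithSeminorms p)
    (pm : ∀ i j : ℕ, i ≤ j → ∀ x, p i x ≤ p j x)
    (w : ℕ → X) (hw : ∀ s, p s (w s) = 0) :
    ∃ x, Tendsto (fun N => ∑ t ∈ Finset.range N, w t) atTop (𝓝 x) := by
  apply cauchySeq_tendsto_of_complete
  rw [cauchySeq_iff]
  intro V hV
  rw [uniformity_eq_comap_nhds_zero, mem_comap] at hV
  obtain ⟨U, hU, hUV⟩ := hV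
  obtain ⟨B, hB, hBU⟩ := (hp.hasBasis.mem_iff).mp hU
  obtain ⟨F, ε, hε, rfl⟩ := (SeminormFamily.basisSets_iff _).mp hB
  refine ⟨F.sup id + 1, fun k hk l hl => hUV ?_⟩
  rw [Set.mem_preimage]
  apply hBU
  show _ ∈ (F.sup p).ball 0 ε
  rw [Seminorm.mem_ball_zero]
  have key : ∀ a b : ℕ, F.sup id + 1 ≤ a → a ≤ b →
      (F.sup p) ((∑ t ∈ Finset.range b, w t) - ∑ t ∈ Finset.range a, w t) = 0 := by
    intro a b ha hab
    rw [← Finset.sum_Ico_eq_sub _ hab]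
    apply seminorm_sum_zero
    intro t ht
    have htone : F.sup id + 1 ≤ t := le_trans ha (Finset.mem_Ico.mp ht).1
    have h1 : (F.sup p) (w t) ≤ p (F.sup id) (w t) := by
      have : F.sup p ≤ p (F.sup id) :=
        Finset.sup_le (fun i hi => Seminorm.le_def.mpr (pm i (F.sup id) (Finset.le_sup (f := id) hi)))
      exact Seminorm.le_def.mp this _
    have h2 : p (F.sup id) (w t) ≤ p t (w t) := pm _ _ (by omega) _
    have := (h1.trans h2).trans_eq (hw t)
    exact le_antisymm this (apply_nonneg _ _)
  rcases le_total k l with h | h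
  · show (F.sup p) _ < ε
    rw [key k l hk h]; exact hε
  · show (F.sup p) _ < ε
    have h0 : (F.sup p) ((∑ t ∈ Finset.range k, w t) - ∑ t ∈ Finset.range l, w t) = 0 :=
      key l k hl h
    have h1 : (F.sup p) ((∑ t ∈ Finset.range l, w t) - ∑ t ∈ Finset.range k, w t) = 0 := by
      rw [← map_neg_eq_map (F.sup p), neg_sub]; exact h0
    rw [h1]; exact hε

/-- Existence of a continuous functional equal to `1` at `v` and vanishing on a closed
finite-codimensional submodule not containing `v`. -/
theorem hc_exists_functional {𝕜 X : Type*} [RCLike 𝕜] [AddCommGroup X] [Module 𝕜 X]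
    [TopologicalSpace X] [IsTopologicalAddGroup X] [ContinuousSMul 𝕜 X]
    (K : Submodule 𝕜 X) (hK : IsClosed (K : Set X)) (hfin : Module.Finite 𝕜 (X ⧸ K))
    (v : X) (hv : v ∉ K) :
    ∃ ℓ : X →L[𝕜] 𝕜, ℓ v = 1 ∧ ∀ w ∈ K, ℓ w = 0 := by
  classical
  obtain ⟨F', hcompl⟩ := Submodule.exists_isCompl K
  have hcompl' : IsCompl F' K := hcompl.symm
  set proj : X →ₗ[𝕜] ↥F' := F'.linearProjOfIsCompl K hcompl'
  -- decompose v
  have hvtop : v ∈ F' ⊔ K := by rw [hcompl'.sup_eq_top]; trivial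
  obtain ⟨a, ha, b, hb, hab⟩ := Submodule.mem_sup.mp hvtop
  have hproj_v : proj v = ⟨a, ha⟩ := by
    rw [← hab, map_add]
    have h1 : proj a = ⟨a, ha⟩ := Submodule.linearProjOfIsCompl_apply_left hcompl' ⟨a, ha⟩
    have h2 : proj b = 0 := Submodule.linearProjOfIsCompl_apply_right hcompl' ⟨b, hb⟩
    rw [h1, h2, add_zero]
  have hane : a ≠ 0 := by
    rintro rfl
    rw [zero_add] at hab
    exact hv (hab ▸ hb)
  have hvF : (⟨a, ha⟩ : ↥F') ≠ 0 := by
    intro h0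
    exact hane (congrArg Subtype.val h0)
  -- functional on F'
  have li : LinearIndepOn 𝕜 id ({(⟨a, ha⟩ : ↥F')} : Set ↥F') :=
    (linearIndepOn_singleton_iff (R := 𝕜) (v := id)).mpr hvF
  let bas := Module.Basis.extend li
  have hmem : (⟨a, ha⟩ : ↥F') ∈ li.extend (Set.subset_univ _) :=
    li.subset_extend _ rfl
  let i0 : ↑(li.extend (Set.subset_univ _)) := ⟨⟨a, ha⟩, hmem⟩
  let φ : ↥F' →ₗ[𝕜] 𝕜 := bas.coord i0
  have hφ : φ ⟨a, ha⟩ = 1 := by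
    have : bas i0 = (⟨a, ha⟩ : ↥F') := Module.Basis.extend_apply_self li i0
    rw [show ((⟨a, ha⟩ : ↥F')) = bas i0 from this.symm]
    simp [φ, Module.Basis.coord_apply, Module.Basis.repr_self]
  set ℓ0 : X →ₗ[𝕜] 𝕜 := φ.comp proj with hℓ0
  have hker : ∀ w ∈ K, ℓ0 w = 0 := by
    intro w hw
    have : proj w = 0 := Submodule.linearProjOfIsCompl_apply_right hcompl' ⟨w, hw⟩
    simp [hℓ0, this]
  have hval : ℓ0 v = 1 := by simp [hℓ0, hproj_v, hφ]
  -- continuity via the finite-dimensional quotient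
  have hle : K ≤ LinearMap.ker ℓ0 := fun w hw => hker w hw
  haveI : IsClosed (K : Set X) := hK
  haveI : FiniteDimensional 𝕜 (X ⧸ K) := hfin
  have hcont : Continuous (K.liftQ ℓ0 hle) :=
    LinearMap.continuous_of_finiteDimensional _
  have hcont0 : Continuous ℓ0 := by
    have : (⇑(K.liftQ ℓ0 hle)) ∘ (⇑K.mkQ) = ⇑ℓ0 := by
      funext x
      exact Submodule.liftQ_apply K ℓ0 x
    rw [← this]
    exact hcont.comp continuous_quot_mk
  exact ⟨⟨ℓ0, hcont0⟩, hval, hker⟩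
set_option maxHeartbeats 2000000 in
/-- Criterion for hypercyclic subspaces when every seminorm of `X` has a kernel of finite
codimension: if `(T n)` satisfies the two conditions below along `(n k)`, then `(T n)`
possesses a hypercyclic subspace. -/
theorem hypercyclic_subspace_criterion_finite_codim_kernels {𝕜 X Y : Type*} [RCLike 𝕜]
    [AddCommGroup X] [Module 𝕜 X] [UniformSpace X] [IsUniformAddGroup X]
    [ContinuousSMul 𝕜 X] [CompleteSpace X] [T2Space X]
    [AddCommGroup Y] [Module 𝕜 Y] [TopologicalSpace Y] [IsTopologicalAddGroup Y]
    [ContinuousSMul 𝕜 Y] [TopologicalSpace.SeparableSpace Y]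
    (p : ℕ → Seminorm 𝕜 X) (hp : WithSeminorms p) (hpm : ∀ n, p n ≤ p (n + 1))
    (hXinf : ¬ Module.Finite 𝕜 X)
    (hcodim : ∀ n, Module.Finite 𝕜 (X ⧸ (p n).kerSubmodule))
    (q : ℕ → Seminorm 𝕜 Y) (hq : WithSeminorms q) (hqm : ∀ j, q j ≤ q (j + 1))
    (T : ℕ → X →L[𝕜] Y)
    (nk : ℕ → ℕ) (hnk : StrictMono nk) (X0 : Set X)
    (h1 : ∀ j : ℕ, ∀ x ∈ X0, ∀ᶠ k in Filter.atTop, q j (T (nk k) x) = 0)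
    (h2 : ∀ K : ℕ, Dense (⋃ k ≥ K, T (nk k) '' X0)) :
    ∃ M : Submodule 𝕜 X, IsClosed (M : Set X) ∧ ¬ Module.Finite 𝕜 M ∧
      ∀ x ∈ M, x ≠ 0 → Dense (Set.range fun n => T n x) := by
  classical
  have pm : ∀ i j : ℕ, i ≤ j → ∀ z, p i z ≤ p j z :=
    fun i j hij => Seminorm.le_def.mp (monotone_nat_of_le_succ hpm hij)
  have qm : ∀ i j : ℕ, i ≤ j → ∀ z, q i z ≤ q j z :=
    fun i j hij => Seminorm.le_def.mp (monotone_nat_of_le_succ hqm hij)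
  have qcont : ∀ i, Continuous ⇑(q i) := fun i => hq.continuous_seminorm i
  have pcont : ∀ i, Continuous ⇑(p i) := fun i => hp.continuous_seminorm i
  have sepX : ∀ z : X, z ≠ 0 → ∃ n, p n z ≠ 0 := fun z hz => hp.separating_of_T1 z hz
  have pker_le : ∀ {a b : ℕ}, a ≤ b → ∀ z : X, p b z = 0 → p a z = 0 := by
    intro a b hab z hz
    exact le_antisymm ((pm a b hab z).trans hz.le) (apply_nonneg _ _)
  -- neighborhoods in Y are controlled by single seminorms
  have nbY : ∀ (U : Set Y) (y : Y), IsOpen U → y ∈ U →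
      ∃ i : ℕ, ∃ ε : ℝ, 0 < ε ∧ ∀ w, q i (w - y) < ε → w ∈ U := by
    intro U y hU hy
    have h1' : U ∈ 𝓝 y := hU.mem_nhds hy
    rw [← nhds_translation_sub y, mem_comap] at h1'
    obtain ⟨t, ht, hsub⟩ := h1'
    obtain ⟨B, hB, hBt⟩ := (hq.hasBasis.mem_iff).mp ht
    obtain ⟨F, ε, hε, rfl⟩ := (SeminormFamily.basisSets_iff _).mp hB
    refine ⟨F.sup id, ε, hε, fun w hw => ?_⟩
    apply hsub
    rw [Set.mem_preimage]
    apply hBt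
    show _ ∈ (F.sup q).ball 0 ε
    rw [Seminorm.mem_ball_zero]
    refine lt_of_le_of_lt ?_ hw
    have : F.sup q ≤ q (F.sup id) :=
      Finset.sup_le (fun i hi => Seminorm.le_def.mpr (qm i (F.sup id) (Finset.le_sup (f := id) hi)))
    exact Seminorm.le_def.mp this _
  haveI : Nonempty Y := ⟨0⟩
  obtain ⟨dseq, hdseq⟩ := TopologicalSpace.exists_dense_seq Y
  by_cases hdeg : ∀ (i : ℕ) (y : Y), q i y = 0
  · -- degenerate case: the topology of Y is indiscrete, take M = ⊤
    refine ⟨⊤, by rw [Submodule.top_coe]; exact isClosed_univ, ?_, ?_⟩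
    · intro hfin
      exact hXinf (Module.Finite.equiv (Submodule.topEquiv))
    · intro x _ _
      rw [dense_iff_inter_open]
      rintro U hU ⟨y, hy⟩
      obtain ⟨i, ε, hε, hball⟩ := nbY U y hU hy
      exact ⟨T 0 x, hball _ (by rw [hdeg]; exact hε), ⟨0, rfl⟩⟩
  · push_neg at hdeg
    obtain ⟨istar, ystar, hys⟩ := hdeg
    set δ : ℝ := q istar ystar with hδdef
    have hδ : 0 < δ := lt_of_le_of_ne (apply_nonneg _ _) (Ne.symm hys)
    -- the submodule of vectors with eventually-vanishing images
    set Z : Submodule 𝕜 X :=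
      { carrier := {x | ∀ i, ∀ᶠ k in atTop, q i (T (nk k) x) = 0}
        zero_mem' := by
          intro i
          exact Eventually.of_forall (fun k => by simp)
        add_mem' := by
          intro a b ha hb i
          filter_upwards [ha i, hb i] with k h1 h2
          refine le_antisymm ?_ (apply_nonneg _ _)
          calc q i (T (nk k) (a + b)) = q i (T (nk k) a + T (nk k) b) := by rw [map_add]
          _ ≤ q i (T (nk k) a) + q i (T (nk k) b) := map_add_le_add _ _ _
          _ = 0 := by rw [h1, h2, add_zero]
        smul_mem' := by
          intro c x hx i
          filter_upwards [hx i] with k h1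
          rw [map_smul, map_smul_eq_mul, h1, mul_zero] } with hZdef
    have hZmem : ∀ x : X, x ∈ Z ↔ ∀ i, ∀ᶠ k in atTop, q i (T (nk k) x) = 0 :=
      fun x => Iff.rfl
    have hX0Z : ∀ u ∈ X0, u ∈ Z := fun u hu i => h1 i u hu
    have hspanZ : Submodule.span 𝕜 X0 ≤ Z := Submodule.span_le.mpr hX0Z
    -- continuity bound
    have bnd : ∀ (i k : ℕ), ∃ ρ : ℕ, ∃ C : ℝ, 0 ≤ C ∧ ∀ x, q i (T k x) ≤ C * p ρ x := by
      intro i k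
      have hcont : Continuous ⇑((q i).comp (T k : X →ₗ[𝕜] Y)) := by
        show Continuous fun x => q i (T k x)
        exact (qcont i).comp (T k).continuous
      obtain ⟨F, C, hC0, hle⟩ := Seminorm.bound_of_continuous hp _ hcont
      refine ⟨F.sup id, C, C.coe_nonneg, fun x => ?_⟩
      have h1 : q i (T k x) ≤ (C : ℝ) * (F.sup p) x := by
        have := Seminorm.le_def.mp hle x
        simpa [Seminorm.comp_apply, NNReal.smul_def, smul_eq_mul] using this
      refine h1.trans ?_
      apply mul_le_mul_of_nonneg_left _ C.coe_nonneg
      have : F.sup p ≤ p (F.sup id) :=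
        Finset.sup_le (fun i' hi => Seminorm.le_def.mpr (pm i' (F.sup id) (Finset.le_sup (f := id) hi)))
      exact Seminorm.le_def.mp this _
    -- key lemma: approximate through vectors of `Z` lying in a prescribed kernel
    have key : ∀ (R κ i : ℕ) (ε : ℝ), 0 < ε → ∀ y : Y,
        ∃ k, κ ≤ k ∧ ∃ v : X, v ∈ Z ∧ p R v = 0 ∧ q i (T (nk k) v - y) < ε := by
      intro R κ i ε hε y
      set K := (p R).kerSubmodule with hK
      haveI : Module.Finite 𝕜 (X ⧸ K) := hcodim R
      haveI : FiniteDimensional 𝕜 (X ⧸ K) := hcodim R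
      set W := Submodule.map K.mkQ (Submodule.span 𝕜 X0) with hW
      obtain ⟨n, w, hwspan⟩ := Module.Finite.exists_fin (R := 𝕜) (M := ↥W)
      have hg : ∀ l : Fin n, ∃ g : X, g ∈ Submodule.span 𝕜 X0 ∧ K.mkQ g = (w l : X ⧸ K) := by
        intro l
        have hwl : (w l : X ⧸ K) ∈ Submodule.map K.mkQ (Submodule.span 𝕜 X0) := (w l).2
        obtain ⟨g, hg1, hg2⟩ := Submodule.mem_map.mp hwl
        exact ⟨g, hg1, hg2⟩
      choose g hg1 hg2 using hg
      have hgZ : ∀ l, g l ∈ Z := fun l => hspanZ (hg1 l)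
      have hev : ∀ᶠ k in atTop, ∀ l : Fin n, q i (T (nk k) (g l)) = 0 := by
        rw [eventually_all]
        intro l
        exact hgZ l i
      obtain ⟨κ', hκ'⟩ := eventually_atTop.mp hev
      set O := {z : Y | q i (z - y) < ε} with hO
      have hOopen : IsOpen O := by
        have hc : Continuous fun z : Y => q i (z - y) :=
          (qcont i).comp (continuous_id.sub continuous_const)
        exact isOpen_lt hc continuous_const
      have hOne : O.Nonempty := ⟨y, by simp [hO, hε]⟩
      obtain ⟨pt, hptD, hptO⟩ := (h2 (max κ κ')).exists_mem_open hOopen hOne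
      simp only [Set.mem_iUnion] at hptD
      obtain ⟨k, hk, hpt⟩ := hptD
      obtain ⟨u, huX0, rfl⟩ := hpt
      -- decompose u
      have humem : K.mkQ u ∈ W := Submodule.mem_map_of_mem (Submodule.subset_span huX0)
      have humem' : (⟨K.mkQ u, humem⟩ : ↥W) ∈ Submodule.span 𝕜 (Set.range w) := by
        rw [hwspan]; trivial
      obtain ⟨c, hc⟩ := (Submodule.mem_span_range_iff_exists_fun 𝕜).mp humem'
      set gg : X := ∑ l, c l • g l with hgg
      have hggZ : gg ∈ Z := Submodule.sum_mem _ (fun l _ => Submodule.smul_mem _ _ (hgZ l))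
      have hggq : K.mkQ gg = K.mkQ u := by
        have : K.mkQ gg = ∑ l, c l • (w l : X ⧸ K) := by
          rw [hgg, map_sum]
          congr 1
          funext l
          rw [map_smul, hg2]
        rw [this]
        have := congrArg (Subtype.val : ↥W → X ⧸ K) hc
        simpa using this
      have hker : p R (u - gg) = 0 := by
        have : u - gg ∈ K := by
          rw [← Submodule.Quotient.mk_eq_zero K]
          have : K.mkQ (u - gg) = 0 := by rw [map_sub, hggq, sub_self]
          simpa [Submodule.mkQ_apply] using this
        exact this
      refine ⟨k, le_trans (le_max_left _ _) hk, u - gg,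
        Z.sub_mem (hX0Z u huX0) hggZ, hker, ?_⟩
      have hTgg : q i (T (nk k) gg) = 0 := by
        rw [hgg, map_sum]
        apply seminorm_sum_zero
        intro l _
        rw [map_smul, map_smul_eq_mul, hκ' k (le_trans (le_max_right _ _) hk) l, mul_zero]
      have heq : T (nk k) (u - gg) - y = (T (nk k) u - y) - T (nk k) gg := by
        rw [map_sub]; abel
      rw [heq]
      calc q i ((T (nk k) u - y) - T (nk k) gg)
          ≤ q i (T (nk k) u - y) + q i (T (nk k) gg) := map_sub_le_add _ _ _
      _ < ε + 0 := by
          rw [hTgg]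
          exact add_lt_add_of_lt_of_le hptO le_rfl
      _ = ε := add_zero ε
    -- schedule data
    set tgt : ℕ → Y := fun s =>
      if (Nat.unpair s).2 = 0 then ystar else dseq (Nat.unpair ((Nat.unpair s).2 - 1)).1 with htgt
    set η : ℕ → ℝ := fun s => min ((1 / 2 : ℝ) ^ s) (δ / 2) with hη
    have hηpos : ∀ s, 0 < η s := fun s => lt_min (by positivity) (half_pos hδ)
    have hηle : ∀ s, η s ≤ (1 / 2 : ℝ) ^ s := fun s => min_le_left _ _
    have hηδ : ∀ s, η s ≤ δ / 2 := fun s => min_le_right _ _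
    set TT : ℕ → X → Y := fun k x => T (nk k) x with hTT
    set SP := HCStep p q TT (fun x => x ∈ Z) tgt η istar with hSP
    -- one step of the construction
    have exStep : ∀ (s : ℕ) (h : ℕ → ℕ × ℕ × ℕ × ℕ × X),
        (∀ t, t < s → SP t h (h t)) → ∃ d, SP s h d := by
      intro s h IH
      have hvZ : ∀ t, t < s → (h t).2.2.2.2 ∈ Z := fun t ht => (IH t ht).1
      set R0 : ℕ := max s (Finset.sup (Finset.range s)
        (fun t => max (h t).2.1 (max (h t).2.2.1 (h t).2.2.2.1))) with hR0
      have hev : ∀ᶠ k in atTop, ∀ t ∈ Finset.range s, ∀ i ∈ Finset.range (s + istar + 1),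
          q i (T (nk k) (h t).2.2.2.2) = 0 := by
        rw [eventually_all_finset]
        intro t ht
        rw [eventually_all_finset]
        intro i _
        exact hvZ t (Finset.mem_range.mp ht) i
      obtain ⟨κ, hκ⟩ := eventually_atTop.mp hev
      obtain ⟨k, hkκ, v, hvZ', hvker, hvapp⟩ := key R0 κ (s + istar) (η s) (hηpos s) (tgt s)
      obtain ⟨ρ, C, hC, hbnd⟩ := bnd (s + istar) (nk k)
      have common : ∀ r : ℕ, ((Nat.unpair s).2 = 0 → p r v ≠ 0) →
          SP s h (k, ρ, r, R0, v) := by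
        intro r hrr
        refine ⟨hvZ', hvker, le_max_left _ _, ?_, hvapp, ⟨C, hC, hbnd⟩, ?_, hrr⟩
        · intro t ht
          show max (h t).2.1 (max (h t).2.2.1 (h t).2.2.2.1) ≤ R0
          rw [hR0]
          exact le_trans
            (Finset.le_sup (f := fun t => max (h t).2.1 (max (h t).2.2.1 (h t).2.2.2.1))
              (Finset.mem_range.mpr ht))
            (le_max_right _ _)
        · intro t ht i hi
          exact hκ k hkκ t (Finset.mem_range.mpr ht) i (Finset.mem_range.mpr (by omega))
      by_cases hmark : (Nat.unpair s).2 = 0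
      · have hvne : v ≠ 0 := by
          intro h0
          rw [h0, map_zero, zero_sub] at hvapp
          have h1 : q (s + istar) (tgt s) < η s := by
            calc q (s + istar) (tgt s) = q (s + istar) (- tgt s) := (map_neg_eq_map _ _).symm
            _ < η s := hvapp
          have h2 : δ ≤ q (s + istar) (tgt s) := by
            have htgts : tgt s = ystar := by simp [htgt, hmark]
            rw [htgts]
            exact qm istar (s + istar) (Nat.le_add_left _ _) ystar
          have h3 : η s ≤ δ / 2 := hηδ s
          linarith
        obtain ⟨r, hr⟩ := sepX v hvne
        exact ⟨(k, ρ, r, R0, v), common r (fun _ => hr)⟩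
      · exact ⟨(k, ρ, 0, R0, v), common 0 (fun h0 => absurd h0 hmark)⟩
    -- build the sequence
    obtain ⟨f, hf⟩ : ∃ f : ℕ → ℕ × ℕ × ℕ × ℕ × X, ∀ s, SP s f (f s) := by
      set dflt : ℕ × ℕ × ℕ × ℕ × X := (0, 0, 0, 0, 0) with hdflt
      set F : ∀ s : ℕ, (∀ t, t < s → ℕ × ℕ × ℕ × ℕ × X) → ℕ × ℕ × ℕ × ℕ × X := fun s pfx =>
        if hh : ∃ d, SP s (fun t => if ht : t < s then pfx t ht else dflt) d then hh.choose
        else dflt with hF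
      refine ⟨hcBuildSeq F, ?_⟩
      intro s
      induction s using Nat.strong_induction_on with
      | _ s IH =>
        have hfs : hcBuildSeq F s = F s (fun t _ => hcBuildSeq F t) := hcBuildSeq_eq F s
        have hagree : ∀ t, t < s →
            hcBuildSeq F t = (if ht : t < s then hcBuildSeq F t else dflt) := by
          intro t ht; rw [dif_pos ht]
        have hex : ∃ d, SP s (fun t => if ht : t < s then hcBuildSeq F t else dflt) d := by
          obtain ⟨d, hd⟩ := exStep s (hcBuildSeq F) IH
          exact ⟨d, HCStep_congr p q TT _ tgt η istar s d hagree hd⟩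
        have hfsd : hcBuildSeq F s = hex.choose := hfs.trans (dif_pos hex)
        have hspec := hex.choose_spec
        rw [← hfsd] at hspec
        exact HCStep_congr p q TT _ tgt η istar s _ (fun t ht => (hagree t ht).symm) hspec
        -- projections of the constructed data
    set kf : ℕ → ℕ := fun s => (f s).1 with hkf
    set ρf : ℕ → ℕ := fun s => (f s).2.1 with hρf
    set rf : ℕ → ℕ := fun s => (f s).2.2.1 with hrf
    set Rf : ℕ → ℕ := fun s => (f s).2.2.2.1 with hRf
    set vf : ℕ → X := fun s => (f s).2.2.2.2 with hvf
    have hfZ : ∀ s, vf s ∈ Z := fun s => (hf s).1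
    have hfker : ∀ s, p (Rf s) (vf s) = 0 := fun s => (hf s).2.1
    have hfsR : ∀ s, s ≤ Rf s := fun s => (hf s).2.2.1
    have hfRmax : ∀ s t, t < s → max (ρf t) (max (rf t) (Rf t)) ≤ Rf s :=
      fun s t ht => (hf s).2.2.2.1 t ht
    have hfapp : ∀ s, q (s + istar) (T (nk (kf s)) (vf s) - tgt s) < η s :=
      fun s => (hf s).2.2.2.2.1
    have hfbnd : ∀ s, ∃ C : ℝ, 0 ≤ C ∧ ∀ z, q (s + istar) (T (nk (kf s)) z) ≤ C * p (ρf s) z :=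
      fun s => (hf s).2.2.2.2.2.1
    have hfpast : ∀ s t, t < s → ∀ i, i ≤ s + istar → q i (T (nk (kf s)) (vf t)) = 0 :=
      fun s t ht i hi => (hf s).2.2.2.2.2.2.1 t ht i hi
    have hfmark : ∀ s, (Nat.unpair s).2 = 0 → p (rf s) (vf s) ≠ 0 :=
      fun s => (hf s).2.2.2.2.2.2.2
    have hRmono : ∀ t s', t < s' → Rf t ≤ Rf s' := fun t s' h =>
      le_trans (le_trans (le_max_right _ _) (le_max_right _ _)) (hfRmax s' t h)
    have hρR : ∀ t s', t < s' → ρf t ≤ Rf s' := fun t s' h =>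
      le_trans (le_max_left _ _) (hfRmax s' t h)
    have hrR : ∀ t s', t < s' → rf t ≤ Rf s' := fun t s' h =>
      le_trans (le_trans (le_max_left _ _) (le_max_right _ _)) (hfRmax s' t h)
    -- pairing facts
    set σ : ℕ → ℕ := fun j => Nat.pair j 0 with hσ
    have hσval : ∀ j, σ j = j * j + j := by
      intro j
      show Nat.pair j 0 = j * j + j
      simp [Nat.pair]
    have hσmono : ∀ j j', j ≤ j' → σ j ≤ σ j' := by
      intro j j' h
      rw [hσval, hσval]
      have := Nat.mul_le_mul h h
      omega
    have hσmono' : ∀ j j', j < j' → σ j < σ j' := by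
      intro j j' h
      rw [hσval, hσval]
      have := Nat.mul_self_lt_mul_self h
      omega
    have hσcol : ∀ j, Nat.unpair (σ j) = (j, 0) := fun j => Nat.unpair_pair j 0
    have hpair_lb : ∀ j b : ℕ, j * j + j ≤ Nat.pair j b := by
      intro j b
      simp only [Nat.pair]
      split
      · next hlt => have := Nat.mul_self_lt_mul_self hlt; omega
      · omega
    have hpair_lb' : ∀ j b : ℕ, b ≠ 0 → j * j + j < Nat.pair j b := by
      intro j b hb
      simp only [Nat.pair]
      split
      · next hlt => have := Nat.mul_self_lt_mul_self hlt; omega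
      · omega
    have hcol_ge : ∀ j t, (Nat.unpair t).1 = j → σ j ≤ t := by
      intro j t hcol
      have hpt : Nat.pair j (Nat.unpair t).2 = t := by rw [← hcol]; exact Nat.pair_unpair t
      rw [hσval, ← hpt]
      exact hpair_lb j _
    have hcol_gt : ∀ j t, (Nat.unpair t).1 = j → (Nat.unpair t).2 ≠ 0 → σ j < t := by
      intro j t hcol hb
      have hpt : Nat.pair j (Nat.unpair t).2 = t := by rw [← hcol]; exact Nat.pair_unpair t
      rw [hσval, ← hpt]
      exact hpair_lb' j _ hb
    have hcol_ne : ∀ j t, (Nat.unpair t).1 = j → t ≠ σ j → σ j < t := by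
      intro j t h hne
      rcases Nat.eq_zero_or_pos (Nat.unpair t).2 with h0 | h0
      · exfalso
        apply hne
        have : Nat.pair (Nat.unpair t).1 (Nat.unpair t).2 = t := Nat.pair_unpair t
        rw [← this, h, h0]
      · exact hcol_gt j t h (by omega)
    -- the series
    set term : ℕ → ℕ → X := fun j t => if (Nat.unpair t).1 = j then vf t else 0 with hterm
    have htermker : ∀ j t, p t (term j t) = 0 := by
      intro j t
      by_cases hcol : (Nat.unpair t).1 = j
      · have : term j t = vf t := by simp [hterm, hcol]
        rw [this]
        exact pker_le (hfsR t) (vf t) (hfker t)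
      · have : term j t = 0 := by simp [hterm, hcol]
        rw [this, map_zero]
    have hxex : ∀ j, ∃ xx : X, Tendsto (fun N => ∑ t ∈ Finset.range N, term j t) atTop (𝓝 xx) :=
      fun j => hc_sum_converges p hp pm (term j) (htermker j)
    choose x hx using hxex
    -- limits along the partial sums
    have semlim : ∀ (g : Seminorm 𝕜 X), Continuous ⇑g → ∀ (j : ℕ) (c : X),
        (∀ᶠ N in atTop, g ((∑ t ∈ Finset.range N, term j t) - c) = 0) → g (x j - c) = 0 := by
      intro g hg j c hev
      have h1 : Tendsto (fun N => g ((∑ t ∈ Finset.range N, term j t) - c)) atTop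
          (𝓝 (g (x j - c))) := (hg.tendsto _).comp ((hx j).sub_const c)
      have h2 : Tendsto (fun N => g ((∑ t ∈ Finset.range N, term j t) - c)) atTop (𝓝 0) :=
        Tendsto.congr' (by filter_upwards [hev] with N hN; exact hN.symm) tendsto_const_nhds
      exact tendsto_nhds_unique h1 h2
    have funlim : ∀ (ℓ : X →L[𝕜] 𝕜) (j : ℕ) (aval : 𝕜),
        (∀ᶠ N in atTop, ℓ (∑ t ∈ Finset.range N, term j t) = aval) → ℓ (x j) = aval := by
      intro ℓ j aval hev
      have h1 : Tendsto (fun N => ℓ (∑ t ∈ Finset.range N, term j t)) atTop (𝓝 (ℓ (x j))) :=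
        (ℓ.continuous.tendsto _).comp (hx j)
      have h2 : Tendsto (fun N => ℓ (∑ t ∈ Finset.range N, term j t)) atTop (𝓝 aval) :=
        Tendsto.congr' (by filter_upwards [hev] with N hN; exact hN.symm) tendsto_const_nhds
      exact tendsto_nhds_unique h1 h2
    -- the seminorms along the chosen operators
    set gsem : ℕ → Seminorm 𝕜 X := fun s => (q (s + istar)).comp (T (nk (kf s)) : X →ₗ[𝕜] Y)
      with hgsem
    have hgsem_apply : ∀ s z, gsem s z = q (s + istar) (T (nk (kf s)) z) := fun s z => rfl
    have hgsemcont : ∀ s, Continuous ⇑(gsem s) := by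
      intro s
      show Continuous fun z => q (s + istar) (T (nk (kf s)) z)
      exact (qcont _).comp (T (nk (kf s))).continuous
    have hterm0 : ∀ s t, t ≠ s → ∀ j, gsem s (term j t) = 0 := by
      intro s t hne j
      by_cases hcol : (Nat.unpair t).1 = j
      · have heq : term j t = vf t := by simp [hterm, hcol]
        rw [heq, hgsem_apply]
        rcases lt_or_gt_of_ne hne with hlt | hgt
        · exact hfpast s t hlt (s + istar) le_rfl
        · obtain ⟨C, hC0, hb⟩ := hfbnd s
          have hker0 : p (ρf s) (vf t) = 0 := pker_le (hρR s t hgt) (vf t) (hfker t)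
          have hb' := hb (vf t)
          rw [hker0, mul_zero] at hb'
          exact le_antisymm hb' (apply_nonneg _ _)
      · have heq : term j t = 0 := by simp [hterm, hcol]
        rw [heq, map_zero]
    have F4a : ∀ s j, (Nat.unpair s).1 = j → gsem s (x j - vf s) = 0 := by
      intro s j hcol
      apply semlim _ (hgsemcont s) j (vf s)
      filter_upwards [eventually_ge_atTop (s + 1)] with N hN
      have hsmem : s ∈ Finset.range N := Finset.mem_range.mpr (by omega)
      have hsplit : ∑ t ∈ Finset.range N, term j t
          = (∑ t ∈ Finset.range N \ {s}, term j t) + term j s :=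
        Finset.sum_eq_sum_sdiff_singleton_add hsmem _
      have htjs : term j s = vf s := by simp [hterm, hcol]
      rw [hsplit, htjs, add_sub_cancel_right]
      apply seminorm_sum_zero
      intro t ht
      have htne : t ≠ s := by
        have := (Finset.mem_sdiff.mp ht).2
        simpa using this
      exact hterm0 s t htne j
    have F4b : ∀ s j, (Nat.unpair s).1 ≠ j → gsem s (x j) = 0 := by
      intro s j hcol
      have h0 : gsem s (x j - 0) = 0 := by
        apply semlim _ (hgsemcont s) j 0
        refine Eventually.of_forall (fun N => ?_)
        rw [sub_zero]
        apply seminorm_sum_zero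
        intro t _
        by_cases hts : t = s
        · subst hts
          have : term j t = 0 := by simp [hterm, hcol]
          rw [this, map_zero]
        · exact hterm0 s t hts j
      rwa [sub_zero] at h0
    -- the biorthogonal functionals
    have hℓex : ∀ j : ℕ, ∃ ℓ : X →L[𝕜] 𝕜, ℓ (vf (σ j)) = 1 ∧
        ∀ w : X, p (rf (σ j)) w = 0 → ℓ w = 0 := by
      intro j
      have hmark : p (rf (σ j)) (vf (σ j)) ≠ 0 := hfmark (σ j) (by rw [hσcol])
      have hKclosed : IsClosed (((p (rf (σ j))).kerSubmodule : Set X)) := by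
        have : ((p (rf (σ j))).kerSubmodule : Set X) = {z : X | p (rf (σ j)) z = 0} := rfl
        rw [this]
        exact isClosed_eq (pcont _) continuous_const
      have hvnot : vf (σ j) ∉ (p (rf (σ j))).kerSubmodule := hmark
      obtain ⟨ℓ, hℓ1, hℓ2⟩ := hc_exists_functional _ hKclosed (hcodim _) _ hvnot
      exact ⟨ℓ, hℓ1, fun w hw => hℓ2 w hw⟩
    choose ℓ hℓ1 hℓ0 using hℓex
    have hkervt : ∀ j t, σ j < t → p (rf (σ j)) (vf t) = 0 :=
      fun j t ht => pker_le (hrR (σ j) t ht) (vf t) (hfker t)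
    have F3a : ∀ j, ℓ j (x j) = 1 := by
      intro j
      apply funlim (ℓ j) j 1
      filter_upwards [eventually_ge_atTop (σ j + 1)] with N hN
      have hsmem : σ j ∈ Finset.range N := Finset.mem_range.mpr (by omega)
      rw [map_sum, Finset.sum_eq_single_of_mem (σ j) hsmem ?_]
      · have : term j (σ j) = vf (σ j) := by simp [hterm, hσcol]
        rw [this]
        exact hℓ1 j
      · intro t htmem htne
        by_cases hcol : (Nat.unpair t).1 = j
        · have hgt : σ j < t := hcol_ne j t hcol htne
          have : term j t = vf t := by simp [hterm, hcol]
          rw [this]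
          exact hℓ0 j _ (hkervt j t hgt)
        · have : term j t = 0 := by simp [hterm, hcol]
          rw [this, map_zero]
    have F3b : ∀ j j', j < j' → ℓ j (x j') = 0 := by
      intro j j' hjj
      apply funlim (ℓ j) j' 0
      refine Eventually.of_forall (fun N => ?_)
      rw [map_sum]
      apply Finset.sum_eq_zero
      intro t _
      by_cases hcol : (Nat.unpair t).1 = j'
      · have h1 : σ j' ≤ t := hcol_ge j' t hcol
        have h2 : σ j < t := lt_of_lt_of_le (hσmono' j j' hjj) h1
        have : term j' t = vf t := by simp [hterm, hcol]
        rw [this]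
        exact hℓ0 j _ (hkervt j t h2)
      · have : term j' t = 0 := by simp [hterm, hcol]
        rw [this, map_zero]
    -- the nested closed subspaces
    set V : ℕ → Submodule 𝕜 X :=
      fun J => (Submodule.span 𝕜 (x '' {i | J ≤ i})).topologicalClosure with hV
    have hxV : ∀ J i, J ≤ i → x i ∈ V J := fun J i hJ =>
      Submodule.le_topologicalClosure _ (Submodule.subset_span ⟨i, hJ, rfl⟩)
    have hxker : ∀ J i, J ≤ i → p (Rf (σ J)) (x i) = 0 := by
      intro J i hJ
      have h0 : p (Rf (σ J)) (x i - 0) = 0 := by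
        apply semlim _ (pcont _) i 0
        refine Eventually.of_forall (fun N => ?_)
        rw [sub_zero]
        apply seminorm_sum_zero
        intro t _
        by_cases hcol : (Nat.unpair t).1 = i
        · have heq : term i t = vf t := by simp [hterm, hcol]
          rw [heq]
          have hσt : σ J ≤ t := le_trans (hσmono J i hJ) (hcol_ge i t hcol)
          rcases eq_or_lt_of_le hσt with heq2 | hlt2
          · rw [heq2]
            exact hfker t
          · exact pker_le (hRmono (σ J) t hlt2) (vf t) (hfker t)
        · have heq : term i t = 0 := by simp [hterm, hcol]
          rw [heq, map_zero]
      rwa [sub_zero] at h0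
    have hVker : ∀ J, V J ≤ (p (Rf (σ J))).kerSubmodule := by
      intro J
      apply Submodule.topologicalClosure_minimal
      · rw [Submodule.span_le]
        rintro _ ⟨i, hi, rfl⟩
        exact hxker J i hi
      · have : (((p (Rf (σ J))).kerSubmodule : Set X)) = {z : X | p (Rf (σ J)) z = 0} := rfl
        rw [this]
        exact isClosed_eq (pcont _) continuous_const
    -- peeling off one coordinate
    have hphi : ∀ (j0 : ℕ) (z : X), z ∈ V j0 → z - (ℓ j0 z) • x j0 ∈ V (j0 + 1) := by
      intro j0 z hz
      set φ : X →L[𝕜] X := ContinuousLinearMap.id 𝕜 X - (ℓ j0).smulRight (x j0) with hφ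
      have hφap : ∀ w, φ w = w - (ℓ j0 w) • x j0 := by
        intro w
        simp [hφ, ContinuousLinearMap.sub_apply, ContinuousLinearMap.smulRight_apply]
      have himg : Submodule.map (φ : X →ₗ[𝕜] X) (Submodule.span 𝕜 (x '' {i | j0 ≤ i}))
          ≤ Submodule.span 𝕜 (x '' {i | j0 + 1 ≤ i}) := by
        rw [Submodule.map_span, Submodule.span_le]
        rintro _ ⟨_, ⟨i, hi, rfl⟩, rfl⟩
        rcases eq_or_lt_of_le (show j0 ≤ i from hi) with heq | hlt
        · have : φ (x i) = 0 := by
            rw [hφap, ← heq, F3a, one_smul, sub_self]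
          rw [ContinuousLinearMap.coe_coe, this]
          exact Submodule.zero_mem _
        · have : φ (x i) = x i := by
            rw [hφap, F3b j0 i hlt, zero_smul, sub_zero]
          rw [ContinuousLinearMap.coe_coe, this]
          exact Submodule.subset_span ⟨i, hlt, rfl⟩
      have hzc : z ∈ closure ((Submodule.span 𝕜 (x '' {i | j0 ≤ i}) : Set X)) := hz
      have hmem1 : φ z ∈ closure (⇑φ '' (Submodule.span 𝕜 (x '' {i | j0 ≤ i}) : Set X)) :=
        image_closure_subset_closure_image φ.continuous ⟨z, hzc, rfl⟩
      have hsub2 : ⇑φ '' (Submodule.span 𝕜 (x '' {i | j0 ≤ i}) : Set X)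
          ⊆ (Submodule.span 𝕜 (x '' {i | j0 + 1 ≤ i}) : Set X) := by
        rintro _ ⟨w, hw, rfl⟩
        exact himg (Submodule.mem_map_of_mem hw)
      have hmem2 : φ z ∈ closure ((Submodule.span 𝕜 (x '' {i | j0 + 1 ≤ i}) : Set X)) :=
        closure_mono hsub2 hmem1
      have : φ z ∈ V (j0 + 1) := hmem2
      rwa [hφap] at this
    -- density of orbits
    have dens : ∀ z : X, z ∈ V 0 → z ≠ 0 → Dense (Set.range fun n => T n z) := by
      intro z hz hzne
      have hnotall : ¬ ∀ J : ℕ, z ∈ V J := by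
        intro hall
        obtain ⟨n, hn⟩ := sepX z hzne
        apply hn
        have h1 : p (Rf (σ n)) z = 0 := hVker n (hall n)
        have h2 : n ≤ Rf (σ n) := le_trans (Nat.left_le_pair n 0) (hfsR (σ n))
        exact pker_le h2 z h1
      haveI : DecidablePred fun J => z ∉ V J := Classical.decPred _
      have hexJ : ∃ J, z ∉ V J := not_forall.mp hnotall
      have hJ1spec : z ∉ V (Nat.find hexJ) := Nat.find_spec hexJ
      have hJ1pos : Nat.find hexJ ≠ 0 := by
        intro h0
        exact hJ1spec (h0 ▸ hz)
      set j0 := Nat.find hexJ - 1 with hj0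
      have hzV : z ∈ V j0 := of_not_not (Nat.find_min hexJ (by omega))
      have hzV' : z ∉ V (j0 + 1) := by
        have heq : j0 + 1 = Nat.find hexJ := by omega
        rw [heq]
        exact hJ1spec
      set a : 𝕜 := ℓ j0 z with ha
      have hz1 : z - a • x j0 ∈ V (j0 + 1) := hphi j0 z hzV
      have haz : a ≠ 0 := by
        intro h0
        apply hzV'
        have h3 := hz1
        rw [h0, zero_smul, sub_zero] at h3
        exact h3
      rw [dense_iff_inter_open]
      rintro U hU ⟨y, hy⟩
      obtain ⟨i, ε, hε, hball⟩ := nbY U y hU hy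
      set O' := {w : Y | q i (a • w - y) < ε / 2} with hO'
      have hO'open : IsOpen O' := by
        have : Continuous fun w : Y => q i (a • w - y) :=
          (qcont i).comp ((continuous_const_smul a).sub continuous_const)
        exact isOpen_lt this continuous_const
      have hO'ne : O'.Nonempty := by
        refine ⟨a⁻¹ • y, ?_⟩
        show q i (a • (a⁻¹ • y) - y) < ε / 2
        rw [smul_inv_smul₀ haz, sub_self, map_zero]
        exact half_pos hε
      obtain ⟨m, hm⟩ := hdseq.exists_mem_open hO'open hO'ne
      obtain ⟨r0, hr0⟩ : ∃ r0 : ℕ, (‖a‖ + 1) * (1 / 2 : ℝ) ^ r0 < ε / 2 := by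
        obtain ⟨n0, hn0⟩ := exists_pow_lt_of_lt_one (x := (ε / 2) / (‖a‖ + 1))
          (by positivity) (by norm_num : (1 / 2 : ℝ) < 1)
        refine ⟨n0, ?_⟩
        rw [lt_div_iff₀ (by positivity)] at hn0
        linarith
      set r := max r0 i with hr
      set s' := Nat.pair j0 (Nat.pair m r + 1) with hs'
      have hcols' : (Nat.unpair s').1 = j0 := by rw [hs', Nat.unpair_pair]
      have htails' : (Nat.unpair s').2 = Nat.pair m r + 1 := by rw [hs', Nat.unpair_pair]
      have htgts' : tgt s' = dseq m := by
        show (if (Nat.unpair s').2 = 0 then ystar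
          else dseq (Nat.unpair ((Nat.unpair s').2 - 1)).1) = dseq m
        rw [htails']
        simp [Nat.unpair_pair]
      have hrs' : r ≤ s' := by
        have hh1 : Nat.pair m r + 1 ≤ s' := by rw [hs']; exact Nat.right_le_pair _ _
        have hh2 : r ≤ Nat.pair m r := Nat.right_le_pair _ _
        omega
      have his' : i ≤ s' + istar := by
        have : i ≤ r := le_max_right _ _
        omega
      have hgz' : gsem s' (z - a • x j0) = 0 := by
        have hsub : V (j0 + 1) ≤ (gsem s').kerSubmodule := by
          apply Submodule.topologicalClosure_minimal
          · rw [Submodule.span_le]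
            rintro _ ⟨i', hi', rfl⟩
            show gsem s' (x i') = 0
            apply F4b
            rw [hcols']
            have : (j0 : ℕ) + 1 ≤ i' := hi'
            omega
          · have : (((gsem s').kerSubmodule : Set X)) = {w : X | gsem s' w = 0} := rfl
            rw [this]
            exact isClosed_eq (hgsemcont s') continuous_const
        exact hsub hz1
      have happx : q (s' + istar) (T (nk (kf s')) (x j0) - dseq m) ≤ η s' := by
        have hc1 : gsem s' (x j0 - vf s') = 0 := F4a s' j0 hcols'
        have hc2 : q (s' + istar) (T (nk (kf s')) (vf s') - dseq m) < η s' := by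
          have := hfapp s'
          rwa [htgts'] at this
        have hdec : T (nk (kf s')) (x j0) - dseq m
            = (T (nk (kf s')) (x j0) - T (nk (kf s')) (vf s'))
              + (T (nk (kf s')) (vf s') - dseq m) := by abel
        calc q (s' + istar) (T (nk (kf s')) (x j0) - dseq m)
            ≤ q (s' + istar) (T (nk (kf s')) (x j0) - T (nk (kf s')) (vf s'))
              + q (s' + istar) (T (nk (kf s')) (vf s') - dseq m) := by
              rw [hdec]; exact map_add_le_add _ _ _
        _ ≤ 0 + η s' := by
            have he : q (s' + istar) (T (nk (kf s')) (x j0) - T (nk (kf s')) (vf s')) = 0 := by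
              rw [← map_sub]
              exact hc1
            rw [he]
            exact add_le_add le_rfl hc2.le
        _ = η s' := zero_add _
      have hqz : q (s' + istar) (T (nk (kf s')) z - a • dseq m) ≤ ‖a‖ * η s' := by
        have hdecomp : T (nk (kf s')) z - a • dseq m
            = a • (T (nk (kf s')) (x j0) - dseq m) + T (nk (kf s')) (z - a • x j0) := by
          rw [map_sub, map_smul, smul_sub]
          abel
        rw [hdecomp]
        calc q (s' + istar) (a • (T (nk (kf s')) (x j0) - dseq m) + T (nk (kf s')) (z - a • x j0))
            ≤ q (s' + istar) (a • (T (nk (kf s')) (x j0) - dseq m))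
              + q (s' + istar) (T (nk (kf s')) (z - a • x j0)) := map_add_le_add _ _ _
        _ = ‖a‖ * q (s' + istar) (T (nk (kf s')) (x j0) - dseq m) + gsem s' (z - a • x j0) := by
            rw [map_smul_eq_mul, hgsem_apply]
        _ ≤ ‖a‖ * η s' + 0 := by
            rw [hgz']
            exact add_le_add (mul_le_mul_of_nonneg_left happx (norm_nonneg a)) le_rfl
        _ = ‖a‖ * η s' := add_zero _
      have hfinal : q i (T (nk (kf s')) z - y) < ε := by
        have hA : q i (T (nk (kf s')) z - a • dseq m) ≤ ‖a‖ * η s' :=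
          le_trans (qm i (s' + istar) his' _) hqz
        have hB : q i (a • dseq m - y) < ε / 2 := hm
        have hC : ‖a‖ * η s' < ε / 2 := by
          have hh1 : η s' ≤ (1 / 2 : ℝ) ^ s' := hηle s'
          have hh2 : ((1 : ℝ) / 2) ^ s' ≤ (1 / 2 : ℝ) ^ r :=
            pow_le_pow_of_le_one (by norm_num) (by norm_num) hrs'
          have hh3 : ((1 : ℝ) / 2) ^ r ≤ (1 / 2 : ℝ) ^ r0 :=
            pow_le_pow_of_le_one (by norm_num) (by norm_num) (le_max_left _ _)
          have hh4 : ‖a‖ * η s' ≤ ‖a‖ * (1 / 2 : ℝ) ^ r0 :=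
            mul_le_mul_of_nonneg_left (by linarith) (norm_nonneg a)
          have hh5 : ‖a‖ * (1 / 2 : ℝ) ^ r0 ≤ (‖a‖ + 1) * (1 / 2 : ℝ) ^ r0 := by
            apply mul_le_mul_of_nonneg_right (by linarith) (by positivity)
          linarith
        have hdec : T (nk (kf s')) z - y
            = (T (nk (kf s')) z - a • dseq m) + (a • dseq m - y) := by abel
        calc q i (T (nk (kf s')) z - y)
            ≤ q i (T (nk (kf s')) z - a • dseq m) + q i (a • dseq m - y) := by
              rw [hdec]; exact map_add_le_add _ _ _
        _ < ε / 2 + ε / 2 := add_lt_add_of_lt_of_lt (hA.trans_lt hC) hB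
        _ = ε := by ring
      exact ⟨T (nk (kf s')) z, hball _ hfinal, ⟨nk (kf s'), rfl⟩⟩
    -- assemble the answer
    refine ⟨V 0, ?_, ?_, ?_⟩
    · exact Submodule.isClosed_topologicalClosure _
    · intro hfin
      have hxmem : ∀ j, x j ∈ V 0 := fun j => hxV 0 j (Nat.zero_le j)
      have hind0 : LinearIndependent 𝕜 (fun j : ℕ => x j) := by
        rw [linearIndependent_iff']
        intro Fs gc hrel
        have H : ∀ i : ℕ, i ∈ Fs → gc i = 0 := by
          intro i
          induction i using Nat.strong_induction_on with
          | _ i IHi =>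
            intro hiF
            have happ := congrArg (ℓ i) hrel
            rw [map_sum, map_zero] at happ
            have hterms : ∀ b ∈ Fs, b ≠ i → ℓ i (gc b • x b) = 0 := by
              intro b hb hbne
              rw [map_smul, smul_eq_mul]
              rcases lt_or_gt_of_ne hbne with hlt | hgt
              · rw [IHi b hlt hb, zero_mul]
              · rw [F3b i b hgt, mul_zero]
            rw [Finset.sum_eq_single_of_mem i hiF hterms] at happ
            rw [map_smul, smul_eq_mul, F3a i, mul_one] at happ
            exact happ
        exact H
      have hind : LinearIndependent 𝕜 (fun j : ℕ => (⟨x j, hxmem j⟩ : V 0)) := by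
        apply LinearIndependent.of_comp (V 0).subtype
        exact hind0
      haveI : Module.Finite 𝕜 ↥(V 0) := hfin
      haveI : Finite ℕ := hind.finite
      exact not_finite ℕ
    · intro z hz hzne
      exact dens z hz hzne
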